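/- arXiv:2207.08628 — 2 statements merged into one kernel-verified Lean document; each statement's English description precedes it below -/
import Mathlib

section
/- There exists a universal constant C > 0 with the following property. Let τ, η ∈ (0,1), let κ := (1/2)·√(2·ln(2/(π·τ²))), let 0 < a_min < a_max < 1, set Δ := a_max − a_min and a_mid := (a_min + a_max)/2, and let k satisfy 1 ≤ k ≤ 2/Δ and a_mid ≥ κ/k. Then there exists an even polynomial P ∈ ℝ[x] with 0 ≤ P(a) ≤ 1 for all a ∈ [−1,1] (hence P is semi-Pellian), such that: for all a ∈ [a_min, a_mid], P(a) ≤ 1/2 + 0.11·k·(a − a_mid) + η + 0.25·τ; for all a ∈ [a_mid, a_max], P(a) ≥ 1/2 + 0.11·k·(a − a_mid) − η − 0.25·τ; and deg(P) ≤ C·√((k² + ln(1/η))·ln(1/η)). -/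
open Real Polynomial


lemma sin_lb {x : ℝ} (h0 : 0 ≤ x) (h1 : x ≤ 1.58) : 0.55 * x ≤ Real.sin x := by
  rcases h0.eq_or_lt with rfl | hx
  · simp
  have ht0 : 0 < x / 2 := by linarith
  have ht1 : x / 2 ≤ 1 := by linarith
  have hs : x / 2 - (x / 2) ^ 3 / 4 < Real.sin (x / 2) := by
    have := Real.sin_gt_sub_cube ht0; linarith [pow_pos ht0 3]
  have hc := Real.one_sub_sq_div_two_le_cos (x := x / 2)
  have h2 : Real.sin x = 2 * Real.sin (x / 2) * Real.cos (x / 2) := by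
    rw [show x = 2 * (x / 2) by ring, Real.sin_two_mul]
    ring_nf
  have hsp : (0:ℝ) < x / 2 - (x / 2) ^ 3 / 4 := by nlinarith
  have hcp : (0:ℝ) < 1 - (x / 2) ^ 2 / 2 := by nlinarith
  have hA := mul_le_mul hs.le hc hcp.le (le_of_lt (lt_trans hsp hs))
  have hs2 : (x/2)^2 ≤ 0.6241 := by nlinarith
  have key : 0.55 * x ≤ 2 * ((x/2 - (x/2)^3/4) * (1 - (x/2)^2/2)) := by
    nlinarith [sq_nonneg ((x/2)^2 - 0.6241), mul_nonneg ht0.le (sq_nonneg ((x/2)^2 - 0.6241)),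
      mul_nonneg ht0.le (sub_nonneg.2 hs2)]
  rw [h2]
  linarith

lemma arcsin_lb {x y : ℝ} (hx : 0 ≤ x) (hxy : x ≤ y) (hy : y ≤ 1/2) :
    y - x ≤ Real.arcsin y - Real.arcsin x := by
  have hmono : MonotoneOn (fun t => Real.arcsin t - t) (Set.Icc (0:ℝ) (1/2)) := by
    apply monotoneOn_of_deriv_nonneg (convex_Icc _ _)
    · exact (Real.continuous_arcsin.sub continuous_id).continuousOn
    · rw [interior_Icc]
      intro t ht
      have h1 : t ≠ -1 := by intro h; rw [h] at ht; norm_num at ht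
      have h2 : t ≠ 1 := by intro h; rw [h] at ht; norm_num at ht
      exact ((Real.hasDerivAt_arcsin h1 h2).sub (hasDerivAt_id t)).differentiableAt.differentiableWithinAt
    · rw [interior_Icc]
      intro t ht
      obtain ⟨ht0, ht1⟩ := ht
      have h1 : t ≠ -1 := by linarith
      have h2 : t ≠ 1 := by linarith
      have hder : HasDerivAt (fun t => Real.arcsin t - t) (1 / Real.sqrt (1 - t ^ 2) - 1) t :=
        (Real.hasDerivAt_arcsin h1 h2).sub (hasDerivAt_id t)
      rw [hder.deriv]
      have hsq : Real.sqrt (1 - t ^ 2) ≤ 1 := Real.sqrt_le_one.mpr (by nlinarith)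
      have hsqp : 0 < Real.sqrt (1 - t ^ 2) := by
        apply Real.sqrt_pos.2; nlinarith
      have : 1 ≤ 1 / Real.sqrt (1 - t ^ 2) := by
        rw [le_div_iff₀ hsqp]; linarith
      linarith
  have := hmono ⟨hx, le_trans hxy hy⟩ ⟨le_trans hx hxy, hy⟩ hxy
  simp only at this
  linarith

lemma arcsin_ub {x y : ℝ} (hx : 0 ≤ x) (hxy : x ≤ y) (hy : y ≤ 0.1) :
    Real.arcsin y - Real.arcsin x ≤ 1.0051 * (y - x) := by
  have hmono : MonotoneOn (fun t => 1.0051 * t - Real.arcsin t) (Set.Icc (0:ℝ) 0.1) := by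
    apply monotoneOn_of_deriv_nonneg (convex_Icc _ _)
    · exact ((continuous_const.mul continuous_id).sub Real.continuous_arcsin).continuousOn
    · rw [interior_Icc]
      intro t ht
      have h1 : t ≠ -1 := by intro h; rw [h] at ht; norm_num at ht
      have h2 : t ≠ 1 := by intro h; rw [h] at ht; norm_num at ht
      exact (((hasDerivAt_id t).const_mul (1.0051:ℝ)).sub
        (Real.hasDerivAt_arcsin h1 h2)).differentiableAt.differentiableWithinAt
    · rw [interior_Icc]
      intro t ht
      obtain ⟨ht0, ht1⟩ := ht
      have h1 : t ≠ -1 := by linarith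
      have h2 : t ≠ 1 := by linarith
      have hder : HasDerivAt (fun t => 1.0051 * t - Real.arcsin t)
          (1.0051 * 1 - 1 / Real.sqrt (1 - t ^ 2)) t :=
        ((hasDerivAt_id t).const_mul (1.0051:ℝ)).sub (Real.hasDerivAt_arcsin h1 h2)
      rw [hder.deriv]
      have hsq : (0.994987:ℝ) ≤ Real.sqrt (1 - t ^ 2) := by
        rw [show (0.994987:ℝ) = Real.sqrt (0.994987^2) by rw [Real.sqrt_sq]; norm_num]
        apply Real.sqrt_le_sqrt; nlinarith
      have : 1 / Real.sqrt (1 - t ^ 2) ≤ 1.0051 := by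
        rw [div_le_iff₀ (by linarith)]; nlinarith
      linarith
  have := hmono ⟨hx, by linarith⟩ ⟨le_trans hx hxy, hy⟩ hxy
  simp only at this
  linarith

lemma natDegree_T_le : ∀ n : ℕ, (Polynomial.Chebyshev.T ℝ (n:ℤ)).natDegree ≤ n := by
  intro n
  induction n using Nat.twoStepInduction with
  | zero => simp [Polynomial.Chebyshev.T_zero]
  | one => simp [Polynomial.Chebyshev.T_one]
  | more n ih1 ih2 =>
    have h : (((n + 2 : ℕ)) : ℤ) = (n:ℤ) + 2 := by push_cast; ring
    rw [h, Polynomial.Chebyshev.T_add_two]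
    apply le_trans (Polynomial.natDegree_sub_le _ _)
    simp only [sup_le_iff]
    constructor
    · apply le_trans Polynomial.natDegree_mul_le
      have h3 : ((n:ℤ) + 1) = ((n + 1 : ℕ) : ℤ) := by push_cast; ring
      rw [h3]
      have h2 : (2 * X : Polynomial ℝ).natDegree ≤ 1 := by
        apply le_trans Polynomial.natDegree_mul_le
        simp
      omega
    · omega

lemma sin_cube_lb {x : ℝ} (h0 : 0 < x) (h5 : x ≤ 0.05) : 0.999375*x ≤ Real.sin x := by
  have h1 := Real.sin_gt_sub_cube h0
  nlinarith [mul_le_mul h5 h5 h0.le (by norm_num : (0:ℝ) ≤ 0.05)]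

set_option maxHeartbeats 2000000 in
theorem exists_hybrid_poly :
    ∃ C : ℝ, 0 < C ∧
      ∀ τ η : ℝ, τ ∈ Set.Ioo (0 : ℝ) 1 → η ∈ Set.Ioo (0 : ℝ) 1 →
      ∀ aMin aMax : ℝ, 0 < aMin → aMin < aMax → aMax < 1 →
      ∀ k : ℝ, 1 ≤ k → k ≤ 2 / (aMax - aMin) →
        (1 / 2) * Real.sqrt (2 * Real.log (2 / (Real.pi * τ ^ 2))) / k ≤
          (aMin + aMax) / 2 →
        ∃ P : Polynomial ℝ,
          (∀ x : ℝ, P.eval (-x) = P.eval x) ∧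
          (∀ a : ℝ, a ∈ Set.Icc (-1 : ℝ) 1 → 0 ≤ P.eval a ∧ P.eval a ≤ 1) ∧
          (∀ a : ℝ, a ∈ Set.Icc aMin ((aMin + aMax) / 2) →
            P.eval a ≤ 1 / 2 + 0.11 * k * (a - (aMin + aMax) / 2) + η + 0.25 * τ) ∧
          (∀ a : ℝ, a ∈ Set.Icc ((aMin + aMax) / 2) aMax →
            1 / 2 + 0.11 * k * (a - (aMin + aMax) / 2) - η - 0.25 * τ ≤ P.eval a) ∧
          (P.natDegree : ℝ) ≤
            C * Real.sqrt ((k ^ 2 + Real.log (1 / η)) * Real.log (1 / η)) := by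
  refine ⟨60, by norm_num, ?_⟩
  rintro τ η ⟨hτ0, hτ1⟩ ⟨hη0, hη1⟩ aMin aMax haMin hlt haMax k hk1 hk2 hκ
  set μ : ℝ := (aMin + aMax) / 2 with hμdef
  set d : ℝ := (aMax - aMin) / 2 with hddef
  have hd0 : 0 < d := by simp only [hddef]; linarith
  have hdμ : d < μ := by simp only [hμdef, hddef]; linarith
  have hμ0 : 0 < μ := by linarith
  have hμd1 : μ + d < 1 := by simp only [hμdef, hddef]; linarith
  have hμ1 : μ < 1 := by linarith
  have haMinEq : aMin = μ - d := by simp only [hμdef, hddef]; ring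
  have haMaxEq : aMax = μ + d := by simp only [hμdef, hddef]; ring
  have hkd : k * d ≤ 1 := by
    have h2d : aMax - aMin = 2 * d := by simp only [hddef]; ring
    rw [h2d] at hk2
    have : k * (2 * d) ≤ (2 / (2 * d)) * (2 * d) := by
      apply mul_le_mul_of_nonneg_right hk2; linarith
    rw [div_mul_cancel₀] at this <;> [linarith; positivity]
  have hk0 : (0:ℝ) < k := by linarith
  by_cases hEasy : 0.11 * k * d ≤ η + 0.25 * τ
  · -- constant polynomial 1/2
    refine ⟨Polynomial.C (1/2), by simp, by norm_num, ?_, ?_, ?_⟩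
    · intro a ha
      rw [Polynomial.eval_C]
      obtain ⟨ha1, ha2⟩ := ha
      have : 0.11 * k * (μ - a) ≤ 0.11 * k * d := by
        apply mul_le_mul_of_nonneg_left _ (by linarith)
        rw [haMinEq] at ha1; linarith
      linarith
    · intro a ha
      rw [Polynomial.eval_C]
      obtain ⟨ha1, ha2⟩ := ha
      have : 0.11 * k * (a - μ) ≤ 0.11 * k * d := by
        apply mul_le_mul_of_nonneg_left _ (by linarith)
        rw [haMaxEq] at ha2; linarith
      linarith
    · rw [Polynomial.natDegree_C]
      push_cast
      positivity
  · -- hard case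
    push_neg at hEasy
    have hη11 : η < 0.11 := by nlinarith
    have hτ44 : τ < 0.44 := by nlinarith
    -- k * μ ≥ 0.707
    have hkμ : 0.707 ≤ k * μ := by
      have hπτ : Real.pi * τ ^ 2 < 0.6083 := by
        have hπ : Real.pi < 3.141593 := Real.pi_lt_d6
        nlinarith [Real.pi_gt_d6]
      have hπτ0 : 0 < Real.pi * τ ^ 2 := by positivity
      have harg : (2.7182818286 : ℝ) ≤ 2 / (Real.pi * τ ^ 2) := by
        rw [le_div_iff₀ hπτ0]; nlinarith
      have hlog : (1:ℝ) ≤ Real.log (2 / (Real.pi * τ ^ 2)) := by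
        rw [Real.le_log_iff_exp_le (by positivity)]
        calc Real.exp 1 ≤ 2.7182818286 := (Real.exp_one_lt_d9).le
          _ ≤ _ := harg
      have hsqrt : (1.414:ℝ) ≤ Real.sqrt (2 * Real.log (2 / (Real.pi * τ ^ 2))) := by
        rw [Real.le_sqrt (by norm_num) (by linarith)]
        linarith
      have := hκ
      rw [div_le_iff₀ hk0] at this
      calc (0.707:ℝ) = (1/2) * 1.414 := by norm_num
        _ ≤ (1/2) * Real.sqrt (2 * Real.log (2 / (Real.pi * τ ^ 2))) := by linarith
        _ ≤ μ * k := this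
        _ = k * μ := by ring
    -- construction parameters
    obtain ⟨m, hmdef⟩ : ∃ m : ℕ, m = ⌈0.41 * k * μ / Real.pi - 1/2⌉₊ := ⟨_, rfl⟩
    obtain ⟨Ω, hΩdef⟩ : ∃ O : ℝ, O = Real.pi/2 + Real.pi * m := ⟨_, rfl⟩
    have hπub : Real.pi < 3.141593 := Real.pi_lt_d6
    have hπlb : (3.141592:ℝ) < Real.pi := Real.pi_gt_d6
    have hΩpos : 0 < Ω := by rw [hΩdef]; positivity
    have hdivπ : 0.41 * k * μ / Real.pi * Real.pi = 0.41 * k * μ := by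
      field_simp
    have hΩlb : 0.41 * (k * μ) ≤ Ω := by
      have h1 : 0.41 * k * μ / Real.pi - 1/2 ≤ (m:ℝ) := by rw [hmdef]; exact_mod_cast Nat.le_ceil _
      have h3 := mul_le_mul_of_nonneg_right h1 Real.pi_pos.le
      rw [sub_mul, hdivπ] at h3
      rw [hΩdef]
      linarith
    have hm0pi : m = 0 → 0.41 * (k * μ) ≤ Real.pi / 2 := by
      intro hm0
      have h1 : 0.41 * k * μ / Real.pi - 1/2 ≤ 0 := by
        by_contra hcon
        push_neg at hcon
        have h5 := Nat.ceil_pos.2 hcon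
        rw [← hmdef] at h5
        omega
      have h3 := mul_le_mul_of_nonneg_right h1 Real.pi_pos.le
      rw [sub_mul, hdivπ, zero_mul] at h3
      linarith
    have hslope : 0.22 * (k * μ) ≤ 0.5496 * Ω := by
      rcases Nat.eq_zero_or_pos m with hm0 | hm1
      · have h2 := hm0pi hm0
        have h3 : Ω = Real.pi/2 := by rw [hΩdef, hm0]; norm_num
        rw [h3]
        linarith [Real.pi_pos]
      · linarith
    have hΩub'' : (m ≠ 0) → Ω ≤ 0.41 * (k * μ) + Real.pi ∧ Real.pi/2 ≤ 0.41 * (k * μ) := by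
      intro hm0
      have hargpos : 0 < 0.41 * k * μ / Real.pi - 1/2 := Nat.ceil_pos.1 (by rw [← hmdef]; exact Nat.pos_of_ne_zero hm0)
      have h1 : (m:ℝ) < 0.41 * k * μ / Real.pi - 1/2 + 1 := by rw [hmdef]; exact_mod_cast Nat.ceil_lt_add_one hargpos.le
      have h3 := mul_le_mul_of_nonneg_right h1.le Real.pi_pos.le
      rw [add_mul, sub_mul, hdivπ, one_mul] at h3
      have h4 := mul_le_mul_of_nonneg_right hargpos.le Real.pi_pos.le
      rw [sub_mul, hdivπ, zero_mul] at h4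
      constructor
      · rw [hΩdef]; linarith
      · linarith
    have hΩub' : (m ≠ 0) → Ω ≤ 1.23 * (k * μ) := by
      intro hm0
      obtain ⟨h1, h2⟩ := hΩub'' hm0
      linarith
    have hΩub : Ω ≤ 0.41 * (k * μ) + Real.pi := by
      rcases Nat.eq_zero_or_pos m with hm0 | hm1
      · have h3 : Ω = Real.pi/2 := by rw [hΩdef, hm0]; norm_num
        linarith [Real.pi_pos, mul_pos hk0 hμ0]
      · exact (hΩub'' (by omega)).1
    have hwin : 1.0051 * (Ω * d / μ) ≤ 1.58 := by
      rcases Nat.eq_zero_or_pos m with hm0 | hm1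
      · have h3 : Ω = Real.pi/2 := by rw [hΩdef, hm0]; norm_num
        have h4 : Ω * d / μ ≤ Ω := by
          rw [div_le_iff₀ hμ0]
          have := mul_le_mul_of_nonneg_left hdμ.le hΩpos.le
          linarith
        linarith
      · have h5 := hΩub' (by omega)
        have h4 : Ω * d / μ ≤ 1.23 * (k * d) := by
          rw [div_le_iff₀ hμ0]
          have h6 := mul_le_mul_of_nonneg_right h5 hd0.le
          have h7 : 1.23 * (k * μ) * d = 1.23 * (k * d) * μ := by ring
          linarith
        have h8 : 1.23 * (k * d) ≤ 1.23 := by linarith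
        linarith
    obtain ⟨N, hNdef⟩ : ∃ N : ℕ, N = max ⌈(10:ℝ)*Ω⌉₊ ⌈Ω/(2*μ)⌉₊ := ⟨_, rfl⟩
    have hN1 : 10*Ω ≤ (N:ℝ) := by
      rw [hNdef]
      refine le_trans (Nat.le_ceil _) ?_
      exact_mod_cast Nat.cast_le.2 (le_max_left _ _)
    have hN2 : Ω/(2*μ) ≤ (N:ℝ) := by
      rw [hNdef]
      refine le_trans (Nat.le_ceil _) ?_
      exact_mod_cast Nat.cast_le.2 (le_max_right _ _)
    have hNpos : 0 < (N:ℝ) := by linarith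
    obtain ⟨ξ, hξdef⟩ : ∃ x : ℝ, x = Ω/(2*(N:ℝ)) := ⟨_, rfl⟩
    have hξ0 : 0 < ξ := by rw [hξdef]; positivity
    have hξ05 : ξ ≤ 0.05 := by
      rw [hξdef, div_le_iff₀ (by positivity)]
      linarith
    have hξμ : ξ ≤ μ := by
      rw [hξdef, div_le_iff₀ (by positivity)]
      rw [div_le_iff₀ (by positivity)] at hN2
      linarith
    have h2Nξ : 2*(N:ℝ)*ξ = Ω := by
      rw [hξdef]; field_simp
    obtain ⟨β, hβdef⟩ : ∃ b : ℝ, b = Real.sin ξ / μ := ⟨_, rfl⟩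
    have hsinξpos : 0 < Real.sin ξ :=
      Real.sin_pos_of_pos_of_lt_pi hξ0 (by linarith)
    have hβ0 : 0 < β := by rw [hβdef]; positivity
    have hβμ : β * μ = Real.sin ξ := by rw [hβdef]; field_simp
    have hsinξub : Real.sin ξ < ξ := Real.sin_lt hξ0
    have hβ1 : β ≤ 1 := by
      rw [hβdef, div_le_one hμ0]; linarith
    have hsinξlb : 0.999375*ξ ≤ Real.sin ξ := sin_cube_lb hξ0 hξ05
    have hAlb : 0.999375*(Ω/μ) ≤ 2*(N:ℝ)*β := by
      have key : 0.999375*Ω ≤ 2*(N:ℝ)*Real.sin ξ := by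
        have h6 := mul_le_mul_of_nonneg_left hsinξlb (by positivity : (0:ℝ) ≤ 2*(N:ℝ))
        have h7 : 2*(N:ℝ)*(0.999375*ξ) = 0.999375*Ω := by rw [← h2Nξ]; ring
        linarith
      calc 0.999375*(Ω/μ) = (0.999375*Ω)/μ := by ring
        _ ≤ (2*(N:ℝ)*Real.sin ξ)/μ := by gcongr
        _ = 2*(N:ℝ)*β := by rw [hβdef]; ring
    have hAub : 2*(N:ℝ)*β ≤ Ω/μ := by
      have key : 2*(N:ℝ)*Real.sin ξ ≤ Ω := by
        have h6 := mul_le_mul_of_nonneg_left hsinξub.le (by positivity : (0:ℝ) ≤ 2*(N:ℝ))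
        rw [h2Nξ] at h6
        exact h6
      calc 2*(N:ℝ)*β = (2*(N:ℝ)*Real.sin ξ)/μ := by rw [hβdef]; ring
        _ ≤ Ω/μ := by gcongr
    have harcβμ : Real.arcsin (β*μ) = ξ := by
      rw [hβμ]
      exact Real.arcsin_sin (by linarith) (by linarith)
    have hβμ01 : β*μ ≤ 0.05 := by rw [hβμ]; linarith
    have hβμd : β*(μ+d) ≤ 0.1 := by
      have h1 : β*(μ+d) ≤ β*(μ+μ) := mul_le_mul_of_nonneg_left (by linarith) hβ0.le
      have h2 : β*(μ+μ) = 2*(β*μ) := by ring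
      rw [hβμ] at h2
      linarith
    set P : Polynomial ℝ := Polynomial.C (1/2) * (1 - Polynomial.C ((-1:ℝ)^m) *
      ((Polynomial.Chebyshev.T ℝ (N:ℤ)).comp
        (1 - Polynomial.C (2*β^2) * Polynomial.X^2))) with hPdef
    have heval : ∀ a : ℝ, -1 ≤ β*a → β*a ≤ 1 →
        P.eval a = (1 - (-1:ℝ)^m * Real.cos (2*(N:ℝ)*Real.arcsin (β*a)))/2 := by
      intro a h1 h2
      have hcos2 : Real.cos (2*Real.arcsin (β*a)) = 1 - 2*β^2*a^2 := by
        rw [Real.cos_two_mul', Real.sin_arcsin h1 h2]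
        have hpy := Real.sin_sq_add_cos_sq (Real.arcsin (β*a))
        rw [Real.sin_arcsin h1 h2] at hpy
        linarith [hpy]
      have hT : P.eval a = (1 - (-1:ℝ)^m *
          ((Polynomial.Chebyshev.T ℝ (N:ℤ)).eval (Real.cos (2*Real.arcsin (β*a)))))/2 := by
        rw [hPdef]
        simp only [Polynomial.eval_mul, Polynomial.eval_sub, Polynomial.eval_one,
          Polynomial.eval_C, Polynomial.eval_comp, Polynomial.eval_pow, Polynomial.eval_X]
        rw [show (1:ℝ) - 2*β^2*a^2 = Real.cos (2*Real.arcsin (β*a)) from hcos2.symm]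
        ring
      rw [hT, Polynomial.Chebyshev.T_real_cos]
      have hang : ((N:ℤ):ℝ) * (2*Real.arcsin (β*a)) = 2*(N:ℝ)*Real.arcsin (β*a) := by
        push_cast; ring
      rw [hang]
    have hphase : ∀ δ : ℝ, (-1:ℝ)^m * Real.cos (Ω + δ) = - Real.sin δ := by
      intro δ
      have h1 : Ω + δ = (Real.pi/2 + δ) + ((m:ℤ):ℝ) * Real.pi := by
        rw [hΩdef]; push_cast; ring
      rw [h1, Real.cos_add_int_mul_pi]
      have h2 : Real.cos (Real.pi/2 + δ) = - Real.sin δ := by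
        rw [Real.cos_add, Real.cos_pi_div_two, Real.sin_pi_div_two]; ring
      rw [h2]
      have h3 : ((-1:ℝ)^((m:ℕ):ℤ)) = (-1:ℝ)^m := zpow_natCast (-1) m
      rw [h3, ← mul_assoc]
      have h4 : (-1:ℝ)^m*(-1:ℝ)^m = 1 := by
        rw [← pow_add]
        exact Even.neg_one_pow ⟨m, rfl⟩
      rw [h4, one_mul]
    have hphaseμ : 2*(N:ℝ)*Real.arcsin (β*μ) = Ω := by rw [harcβμ]; exact h2Nξ
    have hmain : ∀ a : ℝ, μ - d ≤ a → a ≤ μ + d →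
        P.eval a = (1 + Real.sin (2*(N:ℝ)*Real.arcsin (β*a) - Ω))/2 := by
      intro a ha1 ha2
      have haMin0 : 0 < μ - d := by rw [← haMinEq]; exact haMin
      have hβa0 : 0 ≤ β*a := mul_nonneg hβ0.le (by linarith)
      have hβa1 : β*a ≤ 0.1 :=
        le_trans (mul_le_mul_of_nonneg_left (by linarith : a ≤ μ+d) hβ0.le) hβμd
      have key := hphase (2*(N:ℝ)*Real.arcsin (β*a) - Ω)
      have h9 : Ω + (2*(N:ℝ)*Real.arcsin (β*a) - Ω) = 2*(N:ℝ)*Real.arcsin (β*a) := by ring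
      rw [h9] at key
      rw [heval a (by linarith) (by linarith), key]
      ring
    have hslope' : 0.22*k ≤ 0.5496*(Ω/μ) := by
      have h1 : 0.5496*(Ω/μ) = (0.5496*Ω)/μ := by ring
      rw [h1, le_div_iff₀ hμ0]
      linarith [hslope]
    have hkeyR : ∀ a : ℝ, μ ≤ a → a ≤ μ + d →
        0.22*(k*(a-μ)) ≤ Real.sin (2*(N:ℝ)*Real.arcsin (β*a) - Ω) := by
      intro a ha1 ha2
      have hx0 : (0:ℝ) ≤ β*μ := by positivity
      have hx01 : β*μ ≤ β*a := mul_le_mul_of_nonneg_left ha1 hβ0.le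
      have hx1' : β*a ≤ 0.1 :=
        le_trans (mul_le_mul_of_nonneg_left ha2 hβ0.le) hβμd
      have hlb := arcsin_lb hx0 hx01 (by linarith)
      have hub := arcsin_ub hx0 hx01 hx1'
      have hδeq : 2*(N:ℝ)*Real.arcsin (β*a) - Ω
          = 2*(N:ℝ)*(Real.arcsin (β*a) - Real.arcsin (β*μ)) := by
        rw [← hphaseμ]; ring
      rw [hδeq]
      have harc0 : 0 ≤ Real.arcsin (β*a) - Real.arcsin (β*μ) := by linarith [hlb]
      have hδ0 : 0 ≤ 2*(N:ℝ)*(Real.arcsin (β*a) - Real.arcsin (β*μ)) := by positivity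
      have hδub : 2*(N:ℝ)*(Real.arcsin (β*a) - Real.arcsin (β*μ)) ≤ 1.58 := by
        have h2 : 2*(N:ℝ)*(Real.arcsin (β*a) - Real.arcsin (β*μ))
            ≤ 2*(N:ℝ)*(1.0051*(β*a - β*μ)) :=
          mul_le_mul_of_nonneg_left hub (by positivity)
        have h3 : 2*(N:ℝ)*(1.0051*(β*a - β*μ)) = 1.0051*((2*(N:ℝ)*β)*(a - μ)) := by ring
        have h5 : (2*(N:ℝ)*β)*(a-μ) ≤ (Ω/μ)*(a-μ) :=
          mul_le_mul_of_nonneg_right hAub (by linarith)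
        have h6 : (Ω/μ)*(a-μ) ≤ (Ω/μ)*d :=
          mul_le_mul_of_nonneg_left (by linarith) (by positivity)
        have h7 : (Ω/μ)*d = Ω*d/μ := by ring
        linarith [hwin]
      have hsin := sin_lb hδ0 hδub
      have hu0 : (0:ℝ) ≤ a - μ := by linarith
      have c1 := mul_le_mul_of_nonneg_right hslope' hu0
      have c2 : 0.5496*(Ω/μ)*(a-μ) ≤ 0.55*((2*(N:ℝ)*β)*(a-μ)) := by
        have h8 : 0.5496*(Ω/μ) ≤ 0.55*(2*(N:ℝ)*β) := by
          have h9 : (0:ℝ) ≤ Ω/μ := by positivity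
          linarith [hAlb, h9]
        have := mul_le_mul_of_nonneg_right h8 hu0
        linarith [this]
      have c3 : 0.55*((2*(N:ℝ)*β)*(a-μ))
          ≤ 0.55*(2*(N:ℝ)*(Real.arcsin (β*a) - Real.arcsin (β*μ))) := by
        have h10 : β*(a-μ) ≤ Real.arcsin (β*a) - Real.arcsin (β*μ) := by linarith [hlb]
        have h11 : (2*(N:ℝ)*β)*(a-μ) = 2*(N:ℝ)*(β*(a-μ)) := by ring
        rw [h11]
        have h12 := mul_le_mul_of_nonneg_left h10 (by positivity : (0:ℝ) ≤ 2*(N:ℝ))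
        linarith [h12]
      linarith [hsin, c1, c2, c3]
    have hkeyL : ∀ a : ℝ, μ - d ≤ a → a ≤ μ →
        Real.sin (2*(N:ℝ)*Real.arcsin (β*a) - Ω) ≤ 0.22*(k*(a-μ)) := by
      intro a ha1 ha2
      have haMin0 : 0 < μ - d := by rw [← haMinEq]; exact haMin
      have hx0 : (0:ℝ) ≤ β*a := mul_nonneg hβ0.le (by linarith)
      have hx01 : β*a ≤ β*μ := mul_le_mul_of_nonneg_left ha2 hβ0.le
      have hx1' : β*μ ≤ 0.1 := by linarith
      have hlb := arcsin_lb hx0 hx01 (by linarith)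
      have hub := arcsin_ub hx0 hx01 hx1'
      have hδeq : 2*(N:ℝ)*Real.arcsin (β*a) - Ω
          = -(2*(N:ℝ)*(Real.arcsin (β*μ) - Real.arcsin (β*a))) := by
        rw [← hphaseμ]; ring
      rw [hδeq, Real.sin_neg]
      have harc0 : 0 ≤ Real.arcsin (β*μ) - Real.arcsin (β*a) := by linarith [hlb]
      have hδ0 : 0 ≤ 2*(N:ℝ)*(Real.arcsin (β*μ) - Real.arcsin (β*a)) := by positivity
      have hδub : 2*(N:ℝ)*(Real.arcsin (β*μ) - Real.arcsin (β*a)) ≤ 1.58 := by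
        have h2 : 2*(N:ℝ)*(Real.arcsin (β*μ) - Real.arcsin (β*a))
            ≤ 2*(N:ℝ)*(1.0051*(β*μ - β*a)) :=
          mul_le_mul_of_nonneg_left hub (by positivity)
        have h3 : 2*(N:ℝ)*(1.0051*(β*μ - β*a)) = 1.0051*((2*(N:ℝ)*β)*(μ - a)) := by ring
        have h5 : (2*(N:ℝ)*β)*(μ-a) ≤ (Ω/μ)*(μ-a) :=
          mul_le_mul_of_nonneg_right hAub (by linarith)
        have h6 : (Ω/μ)*(μ-a) ≤ (Ω/μ)*d :=
          mul_le_mul_of_nonneg_left (by linarith) (by positivity)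
        have h7 : (Ω/μ)*d = Ω*d/μ := by ring
        linarith [hwin]
      have hsin := sin_lb hδ0 hδub
      have hu0 : (0:ℝ) ≤ μ - a := by linarith
      have c1 := mul_le_mul_of_nonneg_right hslope' hu0
      have c2 : 0.5496*(Ω/μ)*(μ-a) ≤ 0.55*((2*(N:ℝ)*β)*(μ-a)) := by
        have h8 : 0.5496*(Ω/μ) ≤ 0.55*(2*(N:ℝ)*β) := by
          have h9 : (0:ℝ) ≤ Ω/μ := by positivity
          linarith [hAlb, h9]
        have := mul_le_mul_of_nonneg_right h8 hu0
        linarith [this]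
      have c3 : 0.55*((2*(N:ℝ)*β)*(μ-a))
          ≤ 0.55*(2*(N:ℝ)*(Real.arcsin (β*μ) - Real.arcsin (β*a))) := by
        have h10 : β*(μ-a) ≤ Real.arcsin (β*μ) - Real.arcsin (β*a) := by linarith [hlb]
        have h11 : (2*(N:ℝ)*β)*(μ-a) = 2*(N:ℝ)*(β*(μ-a)) := by ring
        rw [h11]
        have h12 := mul_le_mul_of_nonneg_left h10 (by positivity : (0:ℝ) ≤ 2*(N:ℝ))
        linarith [h12]
      linarith [hsin, c1, c2, c3]
    refine ⟨P, ?_, ?_, ?_, ?_, ?_⟩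
    · intro x
      rw [hPdef]
      simp only [Polynomial.eval_mul, Polynomial.eval_sub, Polynomial.eval_one,
        Polynomial.eval_C, Polynomial.eval_comp, Polynomial.eval_pow, Polynomial.eval_X,
        neg_sq]
    · intro a ha
      obtain ⟨ha1, ha2⟩ := ha
      have hb1 : -1 ≤ β*a := by
        have := mul_le_mul_of_nonneg_left ha1 hβ0.le
        linarith [this, hβ1, hβ0.le]
      have hb2 : β*a ≤ 1 := by
        have := mul_le_mul_of_nonneg_left ha2 hβ0.le
        linarith [this, hβ1, hβ0.le]
      rw [heval a hb1 hb2]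
      have hc1 := Real.neg_one_le_cos (2*(N:ℝ)*Real.arcsin (β*a))
      have hc2 := Real.cos_le_one (2*(N:ℝ)*Real.arcsin (β*a))
      rcases Nat.even_or_odd m with he | ho
      · rw [he.neg_one_pow]
        constructor <;> linarith
      · rw [ho.neg_one_pow]
        constructor <;> linarith
    · intro a ha
      obtain ⟨ha1, ha2⟩ := ha
      rw [hmain a (by rw [haMinEq] at ha1; linarith) (by linarith)]
      have := hkeyL a (by rw [haMinEq] at ha1; linarith) ha2
      linarith [this, hη0, hτ0]
    · intro a ha
      obtain ⟨ha1, ha2⟩ := ha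
      rw [hmain a (by linarith) (by rw [haMaxEq] at ha2; linarith)]
      have := hkeyR a ha1 (by rw [haMaxEq] at ha2; linarith)
      linarith [this, hη0, hτ0]
    · have hdeg : P.natDegree ≤ 2*N := by
        rw [hPdef]
        refine le_trans Polynomial.natDegree_mul_le ?_
        simp only [Polynomial.natDegree_C, zero_add]
        refine le_trans (Polynomial.natDegree_sub_le _ _) ?_
        simp only [Polynomial.natDegree_one, sup_le_iff]
        refine ⟨Nat.zero_le _, ?_⟩
        refine le_trans Polynomial.natDegree_mul_le ?_
        simp only [Polynomial.natDegree_C, zero_add]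
        refine le_trans Polynomial.natDegree_comp_le ?_
        have h1 := natDegree_T_le N
        have h2 : (1 - Polynomial.C (2*β^2) * Polynomial.X^2 : Polynomial ℝ).natDegree ≤ 2 := by
          refine le_trans (Polynomial.natDegree_sub_le _ _) ?_
          simp only [Polynomial.natDegree_one, sup_le_iff]
          refine ⟨Nat.zero_le _, ?_⟩
          refine le_trans Polynomial.natDegree_mul_le ?_
          rw [Polynomial.natDegree_C, Polynomial.natDegree_X_pow]
        calc (Polynomial.Chebyshev.T ℝ (N:ℤ)).natDegree *
              (1 - Polynomial.C (2*β^2) * Polynomial.X^2 : Polynomial ℝ).natDegree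
            ≤ N * 2 := Nat.mul_le_mul h1 h2
          _ = 2*N := by ring
      have hL : (2:ℝ) ≤ Real.log (1/η) := by
        rw [Real.le_log_iff_exp_le (by positivity)]
        have he := Real.exp_one_lt_d9
        have h1 : Real.exp 2 = Real.exp 1 * Real.exp 1 := by
          rw [← Real.exp_add]; norm_num
        have h2 : Real.exp 2 < 7.39 := by
          rw [h1]
          have h4 := mul_lt_mul'' he he (Real.exp_pos 1).le (Real.exp_pos 1).le
          have h5 : (2.7182818286:ℝ)*2.7182818286 < 7.39 := by norm_num
          linarith [h4, h5]
        have h3 : (7.39:ℝ) ≤ 1/η := by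
          rw [le_div_iff₀ hη0]; linarith
        linarith
      have hNk : (N:ℝ) ≤ 40*k := by
        have hceil1 : (⌈(10:ℝ)*Ω⌉₊:ℝ) < 10*Ω + 1 := Nat.ceil_lt_add_one (by positivity)
        have hceil2 : (⌈Ω/(2*μ)⌉₊:ℝ) < Ω/(2*μ) + 1 := Nat.ceil_lt_add_one (by positivity)
        have hΩk : Ω ≤ 3.5516*k := by
          have p1 : k*μ ≤ k := mul_le_of_le_one_right hk0.le hμ1.le
          linarith [hΩub, hπub, hk1]
        have hΩμk : Ω/(2*μ) ≤ 2.43*k := by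
          rw [div_le_iff₀ (by positivity)]
          have h5 : Real.pi ≤ 4.4436*(k*μ) := by linarith [hkμ, hπub]
          linarith [hΩub, h5]
        have hmax : (N:ℝ) ≤ max ((⌈(10:ℝ)*Ω⌉₊:ℕ):ℝ) ((⌈Ω/(2*μ)⌉₊:ℕ):ℝ) := by
          rw [hNdef]
          rw [Nat.cast_max]
        have h6 : max ((⌈(10:ℝ)*Ω⌉₊:ℕ):ℝ) ((⌈Ω/(2*μ)⌉₊:ℕ):ℝ) ≤ 40*k := by
          apply max_le
          · linarith [hceil1, hΩk, hk1]
          · linarith [hceil2, hΩμk, hk1]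
        linarith
      have hs : (4/3:ℝ)*k ≤ Real.sqrt ((k^2 + Real.log (1/η))*Real.log (1/η)) := by
        have hL0 : (0:ℝ) ≤ Real.log (1/η) := by linarith
        have q1 : (0:ℝ) ≤ k^2 + Real.log (1/η) := by linarith [sq_nonneg k]
        have r1 : 2*k^2 ≤ k^2*Real.log (1/η) := by
          have := mul_le_mul_of_nonneg_left hL (sq_nonneg k)
          linarith [this]
        rw [Real.le_sqrt (by positivity) (mul_nonneg q1 hL0)]
        linarith [r1, mul_nonneg hL0 hL0, sq_nonneg k]
      have hcast : (P.natDegree : ℝ) ≤ 2*(N:ℝ) := by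
        have := hdeg
        exact_mod_cast this
      calc (P.natDegree : ℝ) ≤ 2*(N:ℝ) := hcast
        _ ≤ 80*k := by linarith
        _ = 60*((4/3)*k) := by ring
        _ ≤ 60*Real.sqrt ((k^2 + Real.log (1/η))*Real.log (1/η)) := by linarith
end

section
/- Let γ, δ > 0 with γ ≤ 1/2, let m := ⌈(1/2)·γ⁻²·ln(1/δ)⌉, and let x ∈ [0,1]. Let S be a binomial random variable counting heads in m independent coin tosses each with heads-probability x². Then: if x ≥ 1/2 + γ, the probability that S > m·(1/4 + γ²) is at least 1 − δ; and if x ≤ 1/2 − γ, the probability that S > m·(1/4 + γ²) is at most δ. -/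
/-- `binomialPMF m p s` is the probability that a binomial random variable with
parameters `m` and `p` takes the value `s`. -/
noncomputable def binomialPMF (m : ℕ) (p : ℝ) (s : ℕ) : ℝ :=
  (m.choose s : ℝ) * p ^ s * (1 - p) ^ (m - s)

/-- Hoeffding's lemma for a Bernoulli random variable, `t ≥ 0`. -/
lemma bern_mgf_le (p : ℝ) (hp0 : 0 ≤ p) (hp1 : p ≤ 1) (t : ℝ) (ht : 0 ≤ t) :
    p * Real.exp t + (1 - p) ≤ Real.exp (p * t + t ^ 2 / 8) := by
  have hφ : ∀ s : ℝ, 0 < 1 - p + p * Real.exp s := by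
    intro s
    nlinarith [Real.exp_pos s, mul_nonneg hp0 (Real.exp_pos s).le]
  set f : ℝ → ℝ := fun s => p * s + s ^ 2 / 8 - Real.log (1 - p + p * Real.exp s) with hf
  set f' : ℝ → ℝ := fun s => p + s / 4 - p * Real.exp s / (1 - p + p * Real.exp s) with hf'
  have hder : ∀ s : ℝ, HasDerivAt f (f' s) s := by
    intro s
    have h1 : HasDerivAt (fun s : ℝ => p * s + s ^ 2 / 8) (p + s / 4) s := by
      have := ((hasDerivAt_id s).const_mul p).add ((hasDerivAt_pow 2 s).div_const 8)
      refine this.congr_deriv ?_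
      ring
    have h2 : HasDerivAt (fun s : ℝ => 1 - p + p * Real.exp s) (p * Real.exp s) s :=
      ((Real.hasDerivAt_exp s).const_mul p).const_add (1 - p)
    have h3 := h2.log (hφ s).ne'
    exact h1.sub h3
  have hder' : ∀ s : ℝ, HasDerivAt f'
      ((1 / 4 : ℝ) - (p * Real.exp s * (1 - p + p * Real.exp s) -
        p * Real.exp s * (p * Real.exp s)) / (1 - p + p * Real.exp s) ^ 2) s := by
    intro s
    have h2 : HasDerivAt (fun s : ℝ => 1 - p + p * Real.exp s) (p * Real.exp s) s :=
      ((Real.hasDerivAt_exp s).const_mul p).const_add (1 - p)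
    have h1 : HasDerivAt (fun s : ℝ => p * Real.exp s) (p * Real.exp s) s :=
      (Real.hasDerivAt_exp s).const_mul p
    have h4 := h1.div h2 (hφ s).ne'
    have h5 : HasDerivAt (fun s : ℝ => p + s / 4) (1 / 4 : ℝ) s := by
      simpa using ((hasDerivAt_id s).div_const 4).const_add p
    exact h5.sub h4
  have hf'nonneg : ∀ s : ℝ, 0 ≤ s → 0 ≤ f' s := by
    intro s hs
    have hmono : Monotone f' := by
      apply monotone_of_deriv_nonneg
      · exact fun s => (hder' s).differentiableAt
      · intro s
        rw [(hder' s).deriv]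
        have h := hφ s
        have hE := Real.exp_pos s
        rw [sub_nonneg, div_le_iff₀ (by positivity)]
        nlinarith [sq_nonneg (1 - p - p * Real.exp s), mul_nonneg hp0 hE.le]
    have h0 : f' 0 = 0 := by
      simp [hf', Real.exp_zero]
    calc (0:ℝ) = f' 0 := h0.symm
      _ ≤ f' s := hmono hs
  have hfmono : MonotoneOn f (Set.Ici (0:ℝ)) := by
    apply monotoneOn_of_deriv_nonneg (convex_Ici 0)
    · exact (fun s _ => (hder s).differentiableAt.continuousAt.continuousWithinAt)
    · intro s hs
      exact (hder s).differentiableAt.differentiableWithinAt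
    · intro s hs
      rw [(hder s).deriv]
      exact hf'nonneg s (le_of_lt (by simpa using hs))
  have h0 : f 0 = 0 := by simp [hf]
  have hft : 0 ≤ f t := by
    calc (0:ℝ) = f 0 := h0.symm
      _ ≤ f t := hfmono (Set.self_mem_Ici) (Set.mem_Ici.2 ht) ht
  have : Real.log (1 - p + p * Real.exp t) ≤ p * t + t ^ 2 / 8 := by
    simp only [hf] at hft; linarith
  have := (Real.log_le_iff_le_exp (hφ t)).1 this
  linarith

/-- Hoeffding's lemma for a Bernoulli random variable, negative exponent. -/
lemma bern_mgf_le_neg (p : ℝ) (hp0 : 0 ≤ p) (hp1 : p ≤ 1) (t : ℝ) (ht : 0 ≤ t) :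
    p * Real.exp (-t) + (1 - p) ≤ Real.exp (-(p * t) + t ^ 2 / 8) := by
  have h := bern_mgf_le (1 - p) (by linarith) (by linarith) t ht
  have e1 : Real.exp (-t) * Real.exp t = 1 := by
    rw [← Real.exp_add]; simp
  have e2 : Real.exp (-t) * Real.exp ((1 - p) * t + t ^ 2 / 8)
      = Real.exp (-(p * t) + t ^ 2 / 8) := by
    rw [← Real.exp_add]; congr 1; ring
  have h3 := mul_le_mul_of_nonneg_left h (Real.exp_pos (-t)).le
  rw [e2] at h3
  nlinarith [Real.exp_pos (-t)]

lemma binomialPMF_nonneg {m : ℕ} {p : ℝ} (hp0 : 0 ≤ p) (hp1 : p ≤ 1) (s : ℕ) :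
    0 ≤ binomialPMF m p s := by
  unfold binomialPMF
  have : (0:ℝ) ≤ 1 - p := by linarith
  positivity

lemma binom_mgf (m : ℕ) (p t : ℝ) :
    ∑ s ∈ Finset.range (m + 1), Real.exp (t * s) * binomialPMF m p s
      = (p * Real.exp t + (1 - p)) ^ m := by
  rw [add_pow]
  apply Finset.sum_congr rfl
  intro s _
  unfold binomialPMF
  have h : Real.exp (t * s) = Real.exp t ^ s := by
    rw [mul_comm, Real.exp_nat_mul]
  rw [h, mul_pow]
  ring

lemma binom_total (m : ℕ) (p : ℝ) :
    ∑ s ∈ Finset.range (m + 1), binomialPMF m p s = 1 := by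
  have := binom_mgf m p 0
  simp only [Real.exp_zero, zero_mul, mul_one, one_mul] at this
  rw [this]
  norm_num

lemma chernoff_upper (m : ℕ) (p T t : ℝ) (ht : 0 ≤ t) (hp0 : 0 ≤ p) (hp1 : p ≤ 1) :
    (∑ s ∈ Finset.range (m + 1), if T < (s:ℝ) then binomialPMF m p s else 0)
      ≤ Real.exp (-(t * T)) * (p * Real.exp t + (1 - p)) ^ m := by
  rw [← binom_mgf, Finset.mul_sum]
  apply Finset.sum_le_sum
  intro s _
  have hB := binomialPMF_nonneg (m := m) hp0 hp1 s
  rw [← mul_assoc, ← Real.exp_add]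
  split_ifs with h
  · have h1 : (1:ℝ) ≤ Real.exp (-(t*T) + t*s) := by
      rw [← Real.exp_zero]
      apply Real.exp_le_exp.2
      nlinarith
    nlinarith
  · positivity

lemma chernoff_lower (m : ℕ) (p T t : ℝ) (ht : 0 ≤ t) (hp0 : 0 ≤ p) (hp1 : p ≤ 1) :
    (∑ s ∈ Finset.range (m + 1), if T < (s:ℝ) then 0 else binomialPMF m p s)
      ≤ Real.exp (t * T) * (p * Real.exp (-t) + (1 - p)) ^ m := by
  rw [← binom_mgf, Finset.mul_sum]
  apply Finset.sum_le_sum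
  intro s _
  have hB := binomialPMF_nonneg (m := m) hp0 hp1 s
  rw [← mul_assoc, ← Real.exp_add]
  split_ifs with h
  · positivity
  · push_neg at h
    have h1 : (1:ℝ) ≤ Real.exp (t*T + -t*s) := by
      rw [← Real.exp_zero]
      apply Real.exp_le_exp.2
      nlinarith
    nlinarith

theorem binomial_threshold_test (γ δ : ℝ) (hγ : 0 < γ) (hγ' : γ ≤ 1 / 2) (hδ : 0 < δ)
    (x : ℝ) (hx : x ∈ Set.Icc (0 : ℝ) 1)
    (m : ℕ) (hm : m = ⌈(1 / 2) * γ⁻¹ ^ 2 * Real.log (1 / δ)⌉₊) :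
    (1 / 2 + γ ≤ x →
      1 - δ ≤ ∑ s ∈ Finset.range (m + 1),
        if (m : ℝ) * (1 / 4 + γ ^ 2) < (s : ℝ) then binomialPMF m (x ^ 2) s else 0) ∧
    (x ≤ 1 / 2 - γ →
      (∑ s ∈ Finset.range (m + 1),
        if (m : ℝ) * (1 / 4 + γ ^ 2) < (s : ℝ) then binomialPMF m (x ^ 2) s else 0) ≤ δ) := by
  obtain ⟨hx0, hx1⟩ := hx
  set p : ℝ := x ^ 2 with hpdef
  have hp0 : 0 ≤ p := sq_nonneg x
  have hp1 : p ≤ 1 := by nlinarith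
  set T : ℝ := (m : ℝ) * (1 / 4 + γ ^ 2) with hT
  have hm0 : (0:ℝ) ≤ (m:ℝ) := Nat.cast_nonneg m
  have ht : (0:ℝ) ≤ 4 * γ := by linarith
  have hmge : (1 / 2) * γ⁻¹ ^ 2 * Real.log (1 / δ) ≤ (m : ℝ) := by
    rw [hm]; exact Nat.le_ceil _
  have hγ2 : (0:ℝ) < γ ^ 2 := by positivity
  have hlog : Real.log (1 / δ) ≤ 2 * γ ^ 2 * m := by
    have heq : Real.log (1 / δ) = 2 * γ ^ 2 * ((1 / 2) * γ⁻¹ ^ 2 * Real.log (1 / δ)) := by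
      field_simp
    rw [heq]
    exact mul_le_mul_of_nonneg_left hmge (by positivity)
  have hexpδ : Real.exp (-(2 * γ ^ 2 * m)) ≤ δ := by
    have h1 : Real.exp (-(2 * γ ^ 2 * m)) ≤ Real.exp (-(Real.log (1 / δ))) :=
      Real.exp_le_exp.2 (by linarith)
    rwa [one_div, Real.log_inv, neg_neg, Real.exp_log hδ] at h1
  constructor
  · -- lower threshold case: x ≥ 1/2 + γ
    intro h1
    have hpge : 1 / 4 + γ + γ ^ 2 ≤ p := by nlinarith
    have hsplit : (∑ s ∈ Finset.range (m + 1),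
        if T < (s : ℝ) then binomialPMF m p s else 0)
        = 1 - ∑ s ∈ Finset.range (m + 1),
            (if T < (s : ℝ) then 0 else binomialPMF m p s) := by
      rw [eq_sub_iff_add_eq, ← Finset.sum_add_distrib, ← binom_total m p]
      apply Finset.sum_congr rfl
      intro s _
      split_ifs <;> ring
    rw [hsplit]
    have hbase : (0:ℝ) ≤ p * Real.exp (-(4*γ)) + (1 - p) := by
      have := Real.exp_pos (-(4*γ))
      nlinarith
    have hchain : (∑ s ∈ Finset.range (m + 1),
        if T < (s : ℝ) then 0 else binomialPMF m p s) ≤ δ := by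
      calc (∑ s ∈ Finset.range (m + 1), if T < (s : ℝ) then 0 else binomialPMF m p s)
          ≤ Real.exp ((4*γ) * T) * (p * Real.exp (-(4*γ)) + (1 - p)) ^ m :=
            chernoff_lower m p T (4*γ) ht hp0 hp1
        _ ≤ Real.exp ((4*γ) * T) * (Real.exp (-(p * (4*γ)) + (4*γ) ^ 2 / 8)) ^ m := by
            apply mul_le_mul_of_nonneg_left _ (Real.exp_pos _).le
            exact pow_le_pow_left₀ hbase (bern_mgf_le_neg p hp0 hp1 (4*γ) ht) m
        _ = Real.exp ((4*γ) * T + m * (-(p * (4*γ)) + (4*γ) ^ 2 / 8)) := by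
            rw [← Real.exp_nat_mul, ← Real.exp_add]
        _ ≤ Real.exp (-(2 * γ ^ 2 * m)) := by
            apply Real.exp_le_exp.2
            have key : (4*γ) * T + (m:ℝ) * (-(p * (4*γ)) + (4*γ) ^ 2 / 8)
                = -(2 * γ ^ 2 * m) - 4 * ((m:ℝ) * γ * (p - (1/4 + γ + γ^2))) := by
              rw [hT]; ring
            have H := mul_nonneg (mul_nonneg hm0 hγ.le) (by linarith :
              (0:ℝ) ≤ p - (1 / 4 + γ + γ ^ 2))
            rw [key]; linarith
        _ ≤ δ := hexpδ
    linarith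
  · -- upper threshold case: x ≤ 1/2 - γ
    intro h2
    have hple : p ≤ 1 / 4 - γ + γ ^ 2 := by nlinarith
    have hbase : (0:ℝ) ≤ p * Real.exp (4*γ) + (1 - p) := by
      have := Real.exp_pos (4*γ)
      nlinarith
    calc (∑ s ∈ Finset.range (m + 1), if T < (s : ℝ) then binomialPMF m p s else 0)
        ≤ Real.exp (-((4*γ) * T)) * (p * Real.exp (4*γ) + (1 - p)) ^ m :=
          chernoff_upper m p T (4*γ) ht hp0 hp1
      _ ≤ Real.exp (-((4*γ) * T)) * (Real.exp (p * (4*γ) + (4*γ) ^ 2 / 8)) ^ m := by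
          apply mul_le_mul_of_nonneg_left _ (Real.exp_pos _).le
          exact pow_le_pow_left₀ hbase (bern_mgf_le p hp0 hp1 (4*γ) ht) m
      _ = Real.exp (-((4*γ) * T) + m * (p * (4*γ) + (4*γ) ^ 2 / 8)) := by
          rw [← Real.exp_nat_mul, ← Real.exp_add]
      _ ≤ Real.exp (-(2 * γ ^ 2 * m)) := by
          apply Real.exp_le_exp.2
          have key : -((4*γ) * T) + (m:ℝ) * (p * (4*γ) + (4*γ) ^ 2 / 8)
              = -(2 * γ ^ 2 * m) - 4 * ((m:ℝ) * γ * ((1/4 - γ + γ^2) - p)) := by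
            rw [hT]; ring
          have H := mul_nonneg (mul_nonneg hm0 hγ.le) (by linarith :
            (0:ℝ) ≤ 1 / 4 - γ + γ ^ 2 - p)
          rw [key]; linarith
      _ ≤ δ := hexpδ
end
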